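/- For the general discrete-time Dynkin game with payoff R(τ,σ) = X_τ 1{τ<σ} + Y_σ 1{σ<τ} + Z_σ 1{σ=τ} and the modified payoff R̃(τ,σ) = L_τ 1{τ<σ} + U_σ 1{σ<τ} + Z_σ 1{σ=τ} where L = X ∧ Z and U = Y ∨ Z: for any stopping times τ, σ there exists a stopping time τ̂ such that R(τ̂, σ) ≥ R̃(τ, σ) pointwise almost surely. Specifically, τ̂ = σ on {σ < τ, Z_σ > Y_σ} and τ̂ = τ otherwise is a stopping time achieving this. -/

import Mathlib

open MeasureTheory Filter Set
open scoped Classical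

/-- Payoff of the general Dynkin game. -/
noncomputable def payoffD {Ω : Type*} (X Y Z : ℕ → Ω → ℝ) (τ σ : Ω → ℕ) (ω : Ω) : ℝ :=
  if τ ω < σ ω then X (τ ω) ω else if σ ω < τ ω then Y (σ ω) ω else Z (σ ω) ω

/-- For the general Dynkin game with payoff `R` and the modified payoff `R̃` built from
`L = X ∧ Z` and `U = Y ∨ Z`: for any stopping times `τ, σ`, the modification
`τ̂ = σ` on `{σ < τ, Z_σ > Y_σ}` and `τ̂ = τ` otherwise is a stopping time satisfying
`R(τ̂, σ) ≥ R̃(τ, σ)` pointwise. -/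
theorem stmt7 {Ω : Type*} {m0 : MeasurableSpace Ω} (μ : Measure Ω) [IsProbabilityMeasure μ]
    (ℱ : Filtration ℕ m0) (T : ℕ)
    (X Y Z : ℕ → Ω → ℝ)
    (hXa : Adapted ℱ X) (hYa : Adapted ℱ Y) (hZa : Adapted ℱ Z)
    (hXi : ∀ s, Integrable (X s) μ) (hYi : ∀ s, Integrable (Y s) μ)
    (hZi : ∀ s, Integrable (Z s) μ)
    (htermX : ∀ ω, X T ω = Z T ω) (htermY : ∀ ω, Y T ω = Z T ω)
    (τ σ : Ω → ℕ)
    (hτ : IsStoppingTime ℱ (fun ω => (τ ω : WithTop ℕ))) (hσ : IsStoppingTime ℱ (fun ω => (σ ω : WithTop ℕ)))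
    (hτr : ∀ ω, τ ω ≤ T) (hσr : ∀ ω, σ ω ≤ T)
    (τh : Ω → ℕ)
    (hτh : ∀ ω, τh ω =
      if σ ω < τ ω ∧ Y (σ ω) ω < Z (σ ω) ω then σ ω else τ ω) :
    IsStoppingTime ℱ (fun ω => (τh ω : WithTop ℕ)) ∧
    ∀ᵐ ω ∂μ,
      payoffD (fun u ω' => min (X u ω') (Z u ω'))
          (fun u ω' => max (Y u ω') (Z u ω')) Z τ σ ω
        ≤ payoffD X Y Z τh σ ω := by
  constructor
  · apply isStoppingTime_of_measurableSet_eq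
    intro n
    suffices hn : MeasurableSet[ℱ n] {ω | τh ω = n} by simpa using hn
    have hset : {ω | τh ω = n} =
        ({ω | σ ω = n} ∩ {ω | τ ω ≤ n}ᶜ ∩ {ω | Y n ω < Z n ω})
        ∪ ({ω | τ ω = n} ∩
            (⋃ k ∈ Finset.range n, {ω | σ ω = k} ∩ {ω | Y k ω < Z k ω})ᶜ) := by
      ext ω
      simp only [Set.mem_setOf_eq, Set.mem_union, Set.mem_inter_iff, Set.mem_compl_iff,
        Set.mem_iUnion, Finset.mem_range, hτh ω, not_exists, not_and]
      by_cases h : σ ω < τ ω ∧ Y (σ ω) ω < Z (σ ω) ω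
      · simp only [if_pos h]
        constructor
        · rintro rfl
          exact Or.inl ⟨⟨rfl, by omega⟩, h.2⟩
        · rintro (⟨⟨rfl, _⟩, _⟩ | ⟨rfl, hk⟩)
          · rfl
          · exact absurd h.2 (by simpa using hk (σ ω) h.1 rfl)
      · simp only [if_neg h]
        constructor
        · rintro rfl
          refine Or.inr ⟨rfl, fun k hk hks => ?_⟩
          subst hks
          exact fun hYZ => h ⟨hk, hYZ⟩
        · rintro (⟨⟨rfl, hn⟩, hYZ⟩ | ⟨rfl, _⟩)
          · exact absurd ⟨not_le.mp hn, hYZ⟩ h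
          · rfl
    rw [hset]
    refine MeasurableSet.union (MeasurableSet.inter (MeasurableSet.inter
      (by simpa using hσ.measurableSet_eq n) ((by simpa using hτ n : MeasurableSet[ℱ n] {ω | τ ω ≤ n}).compl) ) ?_) (MeasurableSet.inter
      (by simpa using hτ.measurableSet_eq n) (MeasurableSet.compl ?_))
    · exact measurableSet_lt (hYa n) (hZa n)
    · refine MeasurableSet.biUnion (Finset.range n).countable_toSet fun k hk => ?_
      have hkn : k < n := Finset.mem_range.mp hk
      refine MeasurableSet.inter (ℱ.mono hkn.le _ (by simpa using hσ.measurableSet_eq k)) ?_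
      exact ℱ.mono hkn.le _
        (measurableSet_lt (hYa k) (hZa k))
  · filter_upwards with ω
    unfold payoffD
    rw [hτh ω]
    by_cases h : σ ω < τ ω ∧ Y (σ ω) ω < Z (σ ω) ω
    · simp only [if_pos h, lt_irrefl, if_neg (lt_irrefl _), if_neg (not_lt_of_gt h.1),
        if_pos h.1]
      exact le_of_eq (max_eq_right h.2.le)
    · simp only [if_neg h]
      rcases lt_trichotomy (τ ω) (σ ω) with hlt | heq | hgt
      · simp only [if_pos hlt]
        exact min_le_left _ _
      · simp [heq]
      · have hYZ : ¬ Y (σ ω) ω < Z (σ ω) ω := fun hc => h ⟨hgt, hc⟩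
        simp only [if_neg (not_lt_of_gt hgt), if_pos hgt]
        exact le_of_eq (max_eq_left (not_lt.mp hYZ))
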